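/- Let x* be a feasible solution of the market clearing LP with virtual linking bids, τ a time period with p^{C,a*}_τ > 0 and q^τ := sum_v p^{D,e*}_{v,τ} > 0, and κ ≠ τ a period with p^{C,a*}_κ < 0. Define q' = min{q^τ, -p^{C,a*}_κ} and choose q'_v with sum_v q'_v = q' and 0 ≤ q'_v ≤ p^{D,e*}_{v,τ}. Then the modified point x' obtained by setting p^{C,a'}_τ = p^{C,a*}_τ - q', p^{D,e'}_{v,τ} = p^{D,e*}_{v,τ} - q'_v, p^{C,a'}_κ = p^{C,a*}_κ + q', p^{D,e'}_{v,κ} = p^{D,e*}_{v,κ} + q'_v (all other variables unchanged) is feasible and has the same objective value as x*. -/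
import Mathlib


open Finset

/-- Data of the market-clearing LP with virtual linking bids (VLB), with `nT` time
periods (Δt = 1), `nL` loads, `nG` generators and `nV` stored inter-storage values. -/
structure MarketData (nT nL nG nV : ℕ) where
  /-- load utilities -/
  U : Fin nL → Fin nT → ℝ
  /-- generation costs -/
  C : Fin nG → Fin nT → ℝ
  /-- inter-storage bid prices (saved charging prices) -/
  S : Fin nV → ℝ
  /-- generation capacities -/
  Pbar : Fin nG → Fin nT → ℝ
  /-- maximum loads -/
  Dbar : Fin nL → Fin nT → ℝ
  /-- initial inter-storage energy for each value -/
  Einit : Fin nV → ℝ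
  /-- storage capacity -/
  Ebar : ℝ
  /-- required final storage level -/
  Eend : ℝ

/-- A point (candidate solution) of the VLB market-clearing LP. -/
structure Sol (nT nL nG nV : ℕ) where
  /-- accepted load quantities -/
  d : Fin nL → Fin nT → ℝ
  /-- accepted generation quantities -/
  p : Fin nG → Fin nT → ℝ
  /-- intra-storage charge (can be negative) -/
  pC : Fin nT → ℝ
  /-- inter-storage discharge for each value -/
  pD : Fin nV → Fin nT → ℝ

variable {nT nL nG nV : ℕ}

/-- Combined storage level at the end of period `t`:
`∑_{i≤t} p^{C,a}_i + ∑_v (E^init_v − ∑_{i≤t} p^{D,e}_{v,i})`. -/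
def level (M : MarketData nT nL nG nV) (x : Sol nT nL nG nV) (t : Fin nT) : ℝ :=
  (∑ i ∈ Finset.univ.filter (fun i => i ≤ t), x.pC i)
    + ∑ v, (M.Einit v - ∑ i ∈ Finset.univ.filter (fun i => i ≤ t), x.pD v i)

/-- Feasibility for the VLB market-clearing LP. -/
def Feasible (M : MarketData nT nL nG nV) (x : Sol nT nL nG nV) : Prop :=
  (∀ t, (∑ l, x.d l t) + x.pC t - (∑ g, x.p g t) - (∑ v, x.pD v t) = 0) ∧
  (∀ g t, 0 ≤ x.p g t ∧ x.p g t ≤ M.Pbar g t) ∧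
  (∀ l t, 0 ≤ x.d l t ∧ x.d l t ≤ M.Dbar l t) ∧
  (0 ≤ ∑ i, x.pC i) ∧
  (∀ t, 0 ≤ level M x t ∧ level M x t ≤ M.Ebar) ∧
  (∀ v t, 0 ≤ x.pD v t) ∧
  (∀ v, ∑ i, x.pD v i ≤ M.Einit v) ∧
  (M.Eend ≤ (∑ i, x.pC i) + ∑ v, (M.Einit v - ∑ i, x.pD v i))

/-- Objective of the VLB market-clearing LP. -/
def Obj (M : MarketData nT nL nG nV) (x : Sol nT nL nG nV) : ℝ :=
  ∑ t, ((∑ l, M.U l t * x.d l t) - (∑ g, M.C g t * x.p g t)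
    - ∑ v, M.S v * x.pD v t)

/-- Optimality for the VLB market-clearing LP. -/
def IsOptimal (M : MarketData nT nL nG nV) (x : Sol nT nL nG nV) : Prop :=
  Feasible M x ∧ ∀ y, Feasible M y → Obj M y ≤ Obj M x

/-- The swap modification from the proof of the main proposition: decrease the
intra-storage charge and the inter-storage discharges at `τ` by `q` (resp. `qv v`),
and increase them at `κ` by the same amounts; all other variables are unchanged. -/
def swap (x : Sol nT nL nG nV) (τ κ : Fin nT) (q : ℝ) (qv : Fin nV → ℝ) :
    Sol nT nL nG nV where
  d := x.d
  p := x.p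
  pC := fun t => if t = τ then x.pC τ - q else if t = κ then x.pC κ + q else x.pC t
  pD := fun v t =>
    if t = τ then x.pD v τ - qv v else if t = κ then x.pD v κ + qv v else x.pD v t


private lemma sum_swap {n : ℕ} (s : Finset (Fin n)) (f : Fin n → ℝ) (τ κ : Fin n)
    (hne : κ ≠ τ) (a b : ℝ) :
    (∑ t ∈ s, (if t = τ then f τ - a else if t = κ then f κ + b else f t))
      = (∑ t ∈ s, f t) - (if τ ∈ s then a else 0) + (if κ ∈ s then b else 0) := by
  have h : ∀ t ∈ s, (if t = τ then f τ - a else if t = κ then f κ + b else f t)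
      = f t + ((if t = τ then -a else 0) + (if t = κ then b else 0)) := by
    intro t _
    split_ifs with h1 h2 <;> simp_all <;> ring
  rw [Finset.sum_congr rfl h, Finset.sum_add_distrib, Finset.sum_add_distrib,
    Finset.sum_ite_eq' s τ (fun _ => -a), Finset.sum_ite_eq' s κ (fun _ => b)]
  split_ifs <;> ring

private lemma swap_pC_apply {nT nL nG nV : ℕ} (x : Sol nT nL nG nV) (τ κ : Fin nT)
    (q : ℝ) (qv : Fin nV → ℝ) (t : Fin nT) :
    (swap x τ κ q qv).pC t
      = if t = τ then x.pC τ - q else if t = κ then x.pC κ + q else x.pC t := rfl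

private lemma swap_pD_apply {nT nL nG nV : ℕ} (x : Sol nT nL nG nV) (τ κ : Fin nT)
    (q : ℝ) (qv : Fin nV → ℝ) (v : Fin nV) (t : Fin nT) :
    (swap x τ κ q qv).pD v t
      = if t = τ then x.pD v τ - qv v else if t = κ then x.pD v κ + qv v
        else x.pD v t := rfl

/-- Given a feasible solution with simultaneous intra-charge and
inter-discharge at `τ` and intra-discharge at `κ ≠ τ`, the swapped point with
`q' = min{q^τ, −p^{C,a*}_κ}` and any split `q'_v` with `∑_v q'_v = q'`,
`0 ≤ q'_v ≤ p^{D,e*}_{v,τ}`, is feasible and has the same objective value. -/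
theorem swap_feasible_and_same_objective
    (M : MarketData nT nL nG nV) (x : Sol nT nL nG nV) (hfeas : Feasible M x)
    (τ κ : Fin nT) (hne : κ ≠ τ)
    (hτC : 0 < x.pC τ) (hτD : 0 < ∑ v, x.pD v τ) (hκ : x.pC κ < 0)
    (q : ℝ) (hq : q = min (∑ v, x.pD v τ) (-x.pC κ))
    (qv : Fin nV → ℝ) (hqsum : ∑ v, qv v = q)
    (hqv : ∀ v, 0 ≤ qv v ∧ qv v ≤ x.pD v τ) :
    Feasible M (swap x τ κ q qv) ∧ Obj M (swap x τ κ q qv) = Obj M x := by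
  obtain ⟨hbal, hp, hd, hCtot, hlvl, hDpos, hDsum, hend⟩ := hfeas
  have hsumC : ∀ s : Finset (Fin nT),
      (∑ t ∈ s, (swap x τ κ q qv).pC t)
        = (∑ t ∈ s, x.pC t) - (if τ ∈ s then q else 0) + (if κ ∈ s then q else 0) := by
    intro s
    simp only [swap_pC_apply]
    exact sum_swap s x.pC τ κ hne q q
  have hsumD : ∀ (v : Fin nV) (s : Finset (Fin nT)),
      (∑ t ∈ s, (swap x τ κ q qv).pD v t)
        = (∑ t ∈ s, x.pD v t) - (if τ ∈ s then qv v else 0)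
          + (if κ ∈ s then qv v else 0) := by
    intro v s
    simp only [swap_pD_apply]
    exact sum_swap s (x.pD v) τ κ hne (qv v) (qv v)
  have hpd : (swap x τ κ q qv).p = x.p := rfl
  have hdd : (swap x τ κ q qv).d = x.d := rfl
  have hlev : ∀ t, level M (swap x τ κ q qv) t = level M x t := by
    intro t
    simp only [level]
    rw [hsumC]
    have hv : ∀ v ∈ (Finset.univ : Finset (Fin nV)),
        (M.Einit v - ∑ i ∈ Finset.univ.filter (fun i => i ≤ t), (swap x τ κ q qv).pD v i)
          = (M.Einit v - ∑ i ∈ Finset.univ.filter (fun i => i ≤ t), x.pD v i)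
            + ((if τ ∈ Finset.univ.filter (fun i => i ≤ t) then qv v else 0)
              - (if κ ∈ Finset.univ.filter (fun i => i ≤ t) then qv v else 0)) := by
      intro v _
      rw [hsumD]
      ring
    rw [Finset.sum_congr rfl hv]
    split_ifs with hA hB <;>
      simp only [Finset.sum_add_distrib, Finset.sum_sub_distrib, Finset.sum_const_zero,
        hqsum] <;> ring
  constructor
  · refine ⟨?_, hp, hd, ?_, ?_, ?_, ?_, ?_⟩
    · intro t
      have hb := hbal t
      rcases eq_or_ne t τ with rfl | h1
      · simp only [swap_pC_apply, swap_pD_apply, if_pos rfl, eq_self_iff_true, if_true]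
        rw [Finset.sum_sub_distrib, hqsum, hpd, hdd]
        linarith
      · rcases eq_or_ne t κ with rfl | h2
        · simp only [swap_pC_apply, swap_pD_apply, if_neg h1, if_pos rfl, eq_self_iff_true, if_true]
          rw [Finset.sum_add_distrib, hqsum, hpd, hdd]
          linarith
        · simp only [swap_pC_apply, swap_pD_apply, if_neg h1, if_neg h2]
          exact hb
    · rw [hsumC Finset.univ]
      simp only [Finset.mem_univ, if_true]
      linarith
    · intro t
      rw [hlev t]
      exact hlvl t
    · intro v t
      rw [swap_pD_apply]
      split_ifs with h1 h2
      · linarith [(hqv v).2]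
      · linarith [hDpos v κ, (hqv v).1]
      · exact hDpos v t
    · intro v
      rw [hsumD v Finset.univ]
      simp only [Finset.mem_univ, if_true]
      linarith [hDsum v]
    · rw [hsumC Finset.univ]
      have hv2 : ∀ v ∈ (Finset.univ : Finset (Fin nV)),
          (M.Einit v - ∑ i, (swap x τ κ q qv).pD v i)
            = M.Einit v - ∑ i, x.pD v i := by
        intro v _
        rw [hsumD v Finset.univ]
        simp
      rw [Finset.sum_congr rfl hv2]
      simp only [Finset.mem_univ, if_true]
      linarith
  · have hD : ∀ t ∈ (Finset.univ : Finset (Fin nT)),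
        (∑ v, M.S v * (swap x τ κ q qv).pD v t)
          = if t = τ then (∑ v, M.S v * x.pD v τ) - (∑ v, M.S v * qv v)
            else if t = κ then (∑ v, M.S v * x.pD v κ) + (∑ v, M.S v * qv v)
            else ∑ v, M.S v * x.pD v t := by
      intro t _
      simp only [swap_pD_apply]
      split_ifs <;>
        simp [mul_sub, mul_add, Finset.sum_sub_distrib, Finset.sum_add_distrib]
    have hsum : (∑ t, ∑ v, M.S v * (swap x τ κ q qv).pD v t)
        = ∑ t, ∑ v, M.S v * x.pD v t := by
      rw [Finset.sum_congr rfl hD,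
        sum_swap Finset.univ (fun t => ∑ v, M.S v * x.pD v t) τ κ hne
          (∑ v, M.S v * qv v) (∑ v, M.S v * qv v)]
      simp
    have hsplit : ∀ y : Sol nT nL nG nV, Obj M y
        = (∑ t, ((∑ l, M.U l t * y.d l t) - (∑ g, M.C g t * y.p g t)))
          - ∑ t, ∑ v, M.S v * y.pD v t := by
      intro y
      rw [Obj, Finset.sum_sub_distrib]
    rw [hsplit, hsplit]
    have hdp : ∀ t, ((∑ l, M.U l t * (swap x τ κ q qv).d l t)
        - (∑ g, M.C g t * (swap x τ κ q qv).p g t))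
          = ((∑ l, M.U l t * x.d l t) - (∑ g, M.C g t * x.p g t)) := fun t => rfl
    rw [Finset.sum_congr rfl (fun t _ => hdp t), hsum]
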